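/- For every initial datum a⁰ in ℓ² with nonnegative components, there exists a global-in-time solution of the dyadic system da_j/dt = λ^{j-1} a_{j-1}² − λ^j a_j a_{j+1} + f_j (with a_{-1}=0, λ=2^{5/2}, f_0>0, f_j=0 for j≥1) on [0,∞), i.e., a function a: [0,∞) → ℓ² with each a_j in C¹ satisfying the ODEs. -/

import Mathlib

open Real Set MeasureTheory Finset Filter

noncomputable def lam : ℝ := (2:ℝ) ^ ((5:ℝ)/2)

/-- Right-hand side of the dyadic system: `da_j/dt = λ^{j-1} a_{j-1}² − λ^j a_j a_{j+1} + f_j`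
with `a_{-1}=0`, forcing `f_0 > 0`, `f_j = 0` for `j ≥ 1`. -/
noncomputable def dyadicRHS (f0 : ℝ) (a : ℕ → ℝ) : ℕ → ℝ
  | 0 => -(a 0 * a 1) + f0
  | (j+1) => lam ^ j * (a j)^2 - lam ^ (j+1) * a (j+1) * a (j+2)

lemma lam_one_le : (1:ℝ) ≤ lam := by
  rw [lam]
  have h := Real.rpow_le_rpow_of_exponent_le (x := (2:ℝ)) one_le_two
    (y := 0) (z := (5:ℝ)/2) (by norm_num)
  simpa using h

lemma lam_pos : (0:ℝ) < lam := lt_of_lt_of_le one_pos lam_one_le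

lemma lam_pow_le {i j : ℕ} (h : i ≤ j) : lam ^ i ≤ lam ^ j :=
  pow_le_pow_right₀ lam_one_le h

lemma one_le_lam_pow (j : ℕ) : (1:ℝ) ≤ lam ^ j := one_le_pow₀ lam_one_le

lemma lam_pow_nonneg (j : ℕ) : (0:ℝ) ≤ lam ^ j := le_of_lt (pow_pos lam_pos j)

/-- Bound on the RHS given componentwise bounds. -/
lemma dyadicRHS_abs_le (f0 : ℝ) (x : ℕ → ℝ) (j : ℕ) (b : ℝ) (hb : 0 ≤ b)
    (hx : ∀ i, i ≤ j + 2 → |x i| ≤ b) :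
    |dyadicRHS f0 x j| ≤ lam ^ (j+1) * (2 * b^2) + |f0| := by
  have hl1 : (1:ℝ) ≤ lam ^ (j+1) := one_le_lam_pow _
  cases j with
  | zero =>
      have h0 := hx 0 (by norm_num)
      have h1 := hx 1 (by norm_num)
      have : |dyadicRHS f0 x 0| ≤ |x 0 * x 1| + |f0| := by
        rw [show dyadicRHS f0 x 0 = -(x 0 * x 1) + f0 from rfl]
        calc |(-(x 0 * x 1) + f0)| ≤ |(-(x 0 * x 1))| + |f0| := abs_add_le _ _
        _ = |x 0 * x 1| + |f0| := by rw [abs_neg]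
      refine this.trans ?_
      have : |x 0 * x 1| ≤ b^2 := by
        rw [abs_mul]
        calc |x 0| * |x 1| ≤ b * b :=
              mul_le_mul h0 h1 (abs_nonneg _) hb
        _ = b^2 := (sq b).symm
      nlinarith [sq_nonneg b]
  | succ j =>
      have hj := hx j (by omega)
      have hj1 := hx (j+1) (by omega)
      have hj2 := hx (j+2) (by omega)
      rw [show dyadicRHS f0 x (j+1) = lam ^ j * (x j)^2 - lam ^ (j+1) * x (j+1) * x (j+2) from rfl]
      have h1 : |lam ^ j * (x j)^2| ≤ lam ^ (j+1) * b^2 := by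
        rw [abs_mul, abs_of_nonneg (lam_pow_nonneg j), abs_of_nonneg (sq_nonneg _)]
        have : (x j)^2 ≤ b^2 := by nlinarith [abs_nonneg (x j), sq_abs (x j)]
        exact mul_le_mul (lam_pow_le (by omega)) this (sq_nonneg _) (lam_pow_nonneg _)
      have h2 : |lam ^ (j+1) * x (j+1) * x (j+2)| ≤ lam ^ (j+1) * b^2 := by
        rw [abs_mul, abs_mul, abs_of_nonneg (lam_pow_nonneg (j+1))]
        have : |x (j+1)| * |x (j+2)| ≤ b^2 := by nlinarith [abs_nonneg (x (j+1))]
        calc lam ^ (j+1) * |x (j+1)| * |x (j+2)| = lam ^ (j+1) * (|x (j+1)| * |x (j+2)|) := by ring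
        _ ≤ lam ^ (j+1) * b^2 := by
            exact mul_le_mul_of_nonneg_left this (lam_pow_nonneg _)
      calc |lam ^ j * (x j)^2 - lam ^ (j+1) * x (j+1) * x (j+2)|
          ≤ |lam ^ j * (x j)^2| + |lam ^ (j+1) * x (j+1) * x (j+2)| := abs_sub _ _
      _ ≤ lam ^ (j+1) * b^2 + lam ^ (j+1) * b^2 := add_le_add h1 h2
      _ ≤ lam ^ (j+1) * (2*b^2) + |f0| := by nlinarith [abs_nonneg f0]
      _ ≤ lam ^ (j+1+1) * (2*b^2) + |f0| := by
          gcongr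
          all_goals first | exact lam_one_le | omega | positivity

/-- Difference bound for the RHS. -/
lemma dyadicRHS_sub_le (f0 : ℝ) (x y : ℕ → ℝ) (j : ℕ) (b δ : ℝ) (hb : 0 ≤ b)
    (hx : ∀ i, i ≤ j + 2 → |x i| ≤ b) (hy : ∀ i, i ≤ j + 2 → |y i| ≤ b)
    (hd : ∀ i, i ≤ j + 2 → |x i - y i| ≤ δ) :
    |dyadicRHS f0 x j - dyadicRHS f0 y j| ≤ lam ^ (j+1) * (4 * b) * δ := by
  have hδ : 0 ≤ δ := le_trans (abs_nonneg _) (hd 0 (by omega))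
  have hl1 : (1:ℝ) ≤ lam ^ (j+1) := one_le_lam_pow _
  have key : ∀ p q : ℕ, p ≤ j+2 → q ≤ j+2 → |x p * x q - y p * y q| ≤ 2 * b * δ := by
    intro p q hp hq
    have : x p * x q - y p * y q = x p * (x q - y q) + (x p - y p) * y q := by ring
    rw [this]
    calc |x p * (x q - y q) + (x p - y p) * y q|
        ≤ |x p * (x q - y q)| + |(x p - y p) * y q| := abs_add_le _ _
    _ = |x p| * |x q - y q| + |x p - y p| * |y q| := by rw [abs_mul, abs_mul]
    _ ≤ b * δ + δ * b := by
        exact add_le_add (mul_le_mul (hx p hp) (hd q hq) (abs_nonneg _) hb)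
          (mul_le_mul (hd p hp) (hy q hq) (abs_nonneg _) hδ)
    _ = 2 * b * δ := by ring
  cases j with
  | zero =>
      have h01 := key 0 1 (by omega) (by omega)
      rw [show dyadicRHS f0 x 0 = -(x 0 * x 1) + f0 from rfl,
          show dyadicRHS f0 y 0 = -(y 0 * y 1) + f0 from rfl]
      have : -(x 0 * x 1) + f0 - (-(y 0 * y 1) + f0) = -(x 0 * x 1 - y 0 * y 1) := by ring
      rw [this, abs_neg]
      nlinarith [mul_nonneg hb hδ, mul_nonneg (mul_nonneg hb hδ) (sub_nonneg.2 hl1)]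
  | succ j =>
      rw [show dyadicRHS f0 x (j+1) = lam ^ j * (x j)^2 - lam ^ (j+1) * x (j+1) * x (j+2) from rfl,
          show dyadicRHS f0 y (j+1) = lam ^ j * (y j)^2 - lam ^ (j+1) * y (j+1) * y (j+2) from rfl]
      have e : lam ^ j * (x j)^2 - lam ^ (j+1) * x (j+1) * x (j+2) -
          (lam ^ j * (y j)^2 - lam ^ (j+1) * y (j+1) * y (j+2))
          = lam ^ j * (x j * x j - y j * y j)
            - lam ^ (j+1) * (x (j+1) * x (j+2) - y (j+1) * y (j+2)) := by ring
      rw [e]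
      have h1 : |lam ^ j * (x j * x j - y j * y j)| ≤ lam ^ (j+1) * (2 * b * δ) := by
        rw [abs_mul, abs_of_nonneg (lam_pow_nonneg j)]
        exact mul_le_mul (lam_pow_le (by omega)) (key j j (by omega) (by omega))
          (abs_nonneg _) (lam_pow_nonneg _)
      have h2 : |lam ^ (j+1) * (x (j+1) * x (j+2) - y (j+1) * y (j+2))|
          ≤ lam ^ (j+1) * (2 * b * δ) := by
        rw [abs_mul, abs_of_nonneg (lam_pow_nonneg (j+1))]
        exact mul_le_mul_of_nonneg_left (key (j+1) (j+2) (by omega) (by omega))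
          (lam_pow_nonneg _)
      calc |lam ^ j * (x j * x j - y j * y j)
            - lam ^ (j+1) * (x (j+1) * x (j+2) - y (j+1) * y (j+2))|
          ≤ |lam ^ j * (x j * x j - y j * y j)|
            + |lam ^ (j+1) * (x (j+1) * x (j+2) - y (j+1) * y (j+2))| := abs_sub _ _
      _ ≤ lam ^ (j+1) * (2*b*δ) + lam ^ (j+1) * (2*b*δ) := add_le_add h1 h2
      _ = lam ^ (j+1) * (4 * b) * δ := by ring
      _ ≤ lam ^ (j+1+1) * (4 * b) * δ := by
          gcongr
          all_goals first | exact lam_one_le | omega | positivity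

/-- Telescoping identity for the energy flux. -/
lemma sum_mul_dyadicRHS (f0 : ℝ) (x : ℕ → ℝ) (N : ℕ) :
    ∑ j ∈ Finset.range (N+1), x j * dyadicRHS f0 x j
      = f0 * x 0 - lam ^ N * (x N)^2 * x (N+1) := by
  induction N with
  | zero =>
      simp [dyadicRHS]; ring
  | succ N ih =>
      rw [Finset.sum_range_succ, ih,
        show dyadicRHS f0 x (N+1) = lam ^ N * (x N)^2 - lam ^ (N+1) * x (N+1) * x (N+2) from rfl]
      ring

/-! ### The sequence space `ℓ²` -/

open scoped ENNReal NNReal Topology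

noncomputable section

abbrev Hs : Type := lp (fun _ : ℕ => ℝ) 2

namespace Dyadic

lemma Hs_hasSum_inner (z w : Hs) : HasSum (fun j => z j * w j) (inner ℝ z w : ℝ) := by
  have h := lp.hasSum_inner (𝕜 := ℝ) z w
  have h2 : HasSum (fun i => (w i : ℝ) * z i) (inner ℝ z w) := by
    simpa [RCLike.inner_apply, conj_trivial] using h
  have h3 : (fun j => (z j : ℝ) * w j) = fun j => (w j : ℝ) * z j :=
    funext fun j => _root_.mul_comm _ _
  rw [h3]
  exact h2

lemma Hs_summable (z : Hs) : Summable (fun j => (z j)^2) := by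
  refine (Hs_hasSum_inner z z).summable.congr fun j => ?_
  ring

lemma Hs_normsq (z : Hs) : ‖z‖^2 = ∑' j, (z j)^2 := by
  have h1 : (inner ℝ z z : ℝ) = ‖z‖ ^ 2 := real_inner_self_eq_norm_sq z
  have h2 : (inner ℝ z z : ℝ) = ∑' j, z j * z j := (Hs_hasSum_inner z z).tsum_eq.symm
  rw [← h1, h2]
  exact tsum_congr fun j => (sq (z j : ℝ)).symm

lemma Hs_sum_range_le (z : Hs) (m : ℕ) : ∑ j ∈ Finset.range m, (z j)^2 ≤ ‖z‖^2 := by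
  rw [Hs_normsq]
  exact Summable.sum_le_tsum _ (fun j _ => sq_nonneg _) (Hs_summable z)

lemma Hs_abs_apply_le (z : Hs) (j : ℕ) : |z j| ≤ ‖z‖ := by
  simpa [Real.norm_eq_abs] using lp.norm_apply_le_norm (E := fun _ : ℕ => ℝ) two_ne_zero z j

lemma memℓp_of_finite_support (x : ℕ → ℝ) (M : ℕ) (h : ∀ j, M ≤ j → x j = 0) :
    Memℓp x 2 := by
  apply memℓp_gen
  apply summable_of_ne_finset_zero (s := Finset.range M)
  intro j hj
  rw [h j (by simpa [Finset.mem_range, not_lt] using hj)]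
  simp

/-- Evaluation of the `j`-th coordinate as a continuous linear map. -/
def evalCLM (j : ℕ) : Hs →L[ℝ] ℝ :=
  LinearMap.mkContinuous
    { toFun := fun z => z j
      map_add' := fun x y => by
        have := lp.coeFn_add x y
        simp only [show ((x + y : Hs) : ℕ → ℝ) = ⇑x + ⇑y from lp.coeFn_add x y]; rfl
      map_smul' := fun c x => by
        simp only [show ((c • x : Hs) : ℕ → ℝ) = c • ⇑x from lp.coeFn_smul c x]; rfl } 1
    (fun z => by simpa [Real.norm_eq_abs] using Hs_abs_apply_le z j)

@[simp] lemma evalCLM_apply (j : ℕ) (z : Hs) : evalCLM j z = z j := rfl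

/-- If `z` has support in `range M` and each component is bounded by `b`
componentwise, then `‖z‖ ≤ M * b'` style bound. -/
lemma Hs_norm_le_of_support (z : Hs) (M : ℕ) (b : ℝ) (hb : 0 ≤ b)
    (h0 : ∀ j, M ≤ j → z j = 0) (hband : ∀ j, |z j| ≤ b) :
    ‖z‖ ≤ (M + 1) * b := by
  have hnn : (0:ℝ) ≤ (M + 1) * b := by positivity
  have hsq : ‖z‖^2 ≤ ((M + 1) * b)^2 := by
    rw [Hs_normsq]
    have : ∑' j, (z j)^2 = ∑ j ∈ Finset.range M, (z j)^2 := by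
      refine tsum_eq_sum ?_
      intro j hj
      rw [h0 j (by simpa [Finset.mem_range, not_lt] using hj)]
      norm_num
    rw [this]
    calc ∑ j ∈ Finset.range M, (z j)^2 ≤ ∑ j ∈ Finset.range M, b^2 := by
          refine Finset.sum_le_sum fun j _ => ?_
          nlinarith [hband j, abs_nonneg (z j), sq_abs (z j)]
    _ = M * b^2 := by rw [Finset.sum_const, Finset.card_range]; ring
    _ ≤ ((M+1) * b)^2 := by nlinarith [sq_nonneg b]
  nlinarith [norm_nonneg z]

/-! ### The truncated (Galerkin) vector field -/

/-- Galerkin truncation of the dyadic vector field, as a map `ℓ² → ℓ²`. -/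
def galF (f0 : ℝ) (N : ℕ) (x : Hs) : Hs :=
  ⟨fun j => if j ≤ N then dyadicRHS f0 x j else 0,
    memℓp_of_finite_support _ (N+1) (fun j hj => if_neg (by omega))⟩

lemma galF_apply (f0 : ℝ) (N : ℕ) (x : Hs) (j : ℕ) :
    (galF f0 N x) j = if j ≤ N then dyadicRHS f0 x j else 0 := rfl

lemma galF_apply_le (f0 : ℝ) (N : ℕ) (x : Hs) (j : ℕ) (hj : j ≤ N) :
    (galF f0 N x) j = dyadicRHS f0 x j := by rw [galF_apply, if_pos hj]

lemma galF_apply_gt (f0 : ℝ) (N : ℕ) (x : Hs) (j : ℕ) (hj : N < j) :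
    (galF f0 N x) j = 0 := by rw [galF_apply, if_neg (by omega)]

/-- Global bound for the truncated field on a ball. -/
lemma galF_norm_le (f0 : ℝ) (N : ℕ) (x : Hs) (R : ℝ) (hR : 0 ≤ R) (hx : ‖x‖ ≤ R) :
    ‖galF f0 N x‖ ≤ (N + 2) * (lam ^ (N+1) * (2 * R^2) + |f0|) := by
  have hcomp : ∀ i : ℕ, |x i| ≤ R := fun i => (Hs_abs_apply_le x i).trans hx
  have hb : (0:ℝ) ≤ lam ^ (N+1) * (2 * R^2) + |f0| := by
    have := lam_pow_nonneg (N+1); positivity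
  have := Hs_norm_le_of_support (galF f0 N x) (N+1) _ hb
    (fun j hj => galF_apply_gt f0 N x j (by omega))
    (fun j => by
      rw [galF_apply]
      split_ifs with h
      · calc |dyadicRHS f0 x j| ≤ lam ^ (j+1) * (2 * R^2) + |f0| :=
              dyadicRHS_abs_le f0 x j R hR (fun i _ => hcomp i)
        _ ≤ lam ^ (N+1) * (2 * R^2) + |f0| := by
            gcongr
            all_goals first | exact lam_one_le | omega | positivity
      · simpa using hb)
  calc ‖galF f0 N x‖ ≤ ((N+1:ℕ) + 1) * (lam ^ (N+1) * (2 * R^2) + |f0|) := this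
  _ = (N + 2) * (lam ^ (N+1) * (2 * R^2) + |f0|) := by push_cast; ring

/-- Lipschitz estimate for the truncated field on a ball. -/
lemma galF_lip (f0 : ℝ) (N : ℕ) (x y : Hs) (R : ℝ) (hR : 0 ≤ R)
    (hx : ‖x‖ ≤ R) (hy : ‖y‖ ≤ R) :
    ‖galF f0 N x - galF f0 N y‖ ≤ (N + 2) * (lam ^ (N+1) * (4 * R)) * ‖x - y‖ := by
  have hcx : ∀ i : ℕ, |x i| ≤ R := fun i => (Hs_abs_apply_le x i).trans hx
  have hcy : ∀ i : ℕ, |y i| ≤ R := fun i => (Hs_abs_apply_le y i).trans hy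
  have hcd : ∀ i : ℕ, |x i - y i| ≤ ‖x - y‖ := fun i => by
    have := Hs_abs_apply_le (x - y) i
    rwa [show ((x - y : Hs) : ℕ → ℝ) i = x i - y i from by
      rw [lp.coeFn_sub]; rfl] at this
  have hb : (0:ℝ) ≤ lam ^ (N+1) * (4 * R) * ‖x - y‖ := by
    have := lam_pow_nonneg (N+1); positivity
  have key := Hs_norm_le_of_support (galF f0 N x - galF f0 N y) (N+1) _ hb
    (fun j hj => by
      rw [lp.coeFn_sub, Pi.sub_apply, galF_apply_gt f0 N x j (by omega),
        galF_apply_gt f0 N y j (by omega), sub_zero])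
    (fun j => by
      rw [lp.coeFn_sub, Pi.sub_apply, galF_apply, galF_apply]
      split_ifs with h
      · calc |dyadicRHS f0 x j - dyadicRHS f0 y j|
            ≤ lam ^ (j+1) * (4 * R) * ‖x - y‖ :=
              dyadicRHS_sub_le f0 x y j R (‖x - y‖) hR (fun i _ => hcx i)
                (fun i _ => hcy i) (fun i _ => hcd i)
        _ ≤ lam ^ (N+1) * (4 * R) * ‖x - y‖ := by
            gcongr
            all_goals first | exact lam_one_le | omega | positivity
      · simpa using hb)
  calc ‖galF f0 N x - galF f0 N y‖
      ≤ ((N+1:ℕ) + 1) * (lam ^ (N+1) * (4 * R) * ‖x - y‖) := key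
  _ = (N + 2) * (lam ^ (N+1) * (4 * R)) * ‖x - y‖ := by push_cast; ring

/-- Energy flux identity for the truncated field. -/
lemma inner_galF (f0 : ℝ) (N : ℕ) (x : Hs) (hx : x (N+1) = 0) :
    (inner ℝ (galF f0 N x) x : ℝ) = f0 * x 0 := by
  have h := (Hs_hasSum_inner (galF f0 N x) x).tsum_eq.symm
  rw [h]
  have : ∑' j, (galF f0 N x) j * x j
      = ∑ j ∈ Finset.range (N+1), (galF f0 N x) j * x j := by
    refine tsum_eq_sum ?_
    intro j hj
    rw [galF_apply_gt f0 N x j (by simpa [Finset.mem_range, not_lt] using hj), zero_mul]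
  rw [this]
  have : ∑ j ∈ Finset.range (N+1), (galF f0 N x) j * x j
      = ∑ j ∈ Finset.range (N+1), x j * dyadicRHS f0 x j := by
    refine Finset.sum_congr rfl fun j hj => ?_
    rw [galF_apply_le f0 N x j (by simpa [Finset.mem_range, Nat.lt_succ_iff] using hj)]
    ring
  rw [this, sum_mul_dyadicRHS, hx]
  ring

/-! ### Radial retraction onto a ball -/

/-- Radial retraction of `ℓ²` onto the closed ball of radius `R`. -/
def ret (R : ℝ) (x : Hs) : Hs := if ‖x‖ ≤ R then x else (R / ‖x‖) • x

lemma ret_eq_self {R : ℝ} {x : Hs} (h : ‖x‖ ≤ R) : ret R x = x := if_pos h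

lemma ret_norm_le {R : ℝ} (hR : 0 ≤ R) (x : Hs) : ‖ret R x‖ ≤ R := by
  rw [ret]
  split_ifs with h
  · exact h
  · push_neg at h
    have hx : 0 < ‖x‖ := lt_of_le_of_lt hR h
    rw [norm_smul, Real.norm_eq_abs, abs_div, abs_of_nonneg hR, abs_of_pos hx,
      div_mul_cancel₀ _ (ne_of_gt hx)]

lemma ret_eq_smul {R : ℝ} (hR : 0 < R) (x : Hs) :
    ∃ m : ℝ, 0 < m ∧ ret R x = m • x := by
  rw [ret]
  split_ifs with h
  · exact ⟨1, one_pos, (one_smul ℝ x).symm⟩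
  · push_neg at h
    have hx : 0 < ‖x‖ := lt_trans hR h
    exact ⟨R / ‖x‖, div_pos hR hx, rfl⟩

lemma ret_mixed {R : ℝ} (hR : 0 ≤ R) {x y : Hs} (hx : ‖x‖ ≤ R) (hy : R < ‖y‖) :
    ‖x - ret R y‖ ≤ 2 * ‖x - y‖ := by
  have hny : 0 < ‖y‖ := lt_of_le_of_lt hR hy
  have hret : ret R y = (R / ‖y‖) • y := if_neg (not_le.2 hy)
  have h1 : ‖y - (R / ‖y‖) • y‖ = ‖y‖ - R := by
    have : y - (R / ‖y‖) • y = (1 - R / ‖y‖) • y := by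
      rw [sub_smul, one_smul]
    rw [this, norm_smul, Real.norm_eq_abs, abs_of_nonneg (by
      rw [sub_nonneg]; exact div_le_one_of_le₀ (le_of_lt hy) (le_of_lt hny)),
      sub_mul]
    rw [div_mul_cancel₀ _ (ne_of_gt hny)]; ring
  have h2 : ‖y‖ - R ≤ ‖x - y‖ := by
    have := norm_sub_norm_le y x
    have h3 : ‖y - x‖ = ‖x - y‖ := norm_sub_rev y x
    linarith [hx]
  calc ‖x - ret R y‖ = ‖(x - y) + (y - ret R y)‖ := by
        congr 1; abel
  _ ≤ ‖x - y‖ + ‖y - ret R y‖ := norm_add_le _ _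
  _ = ‖x - y‖ + (‖y‖ - R) := by rw [hret, h1]
  _ ≤ 2 * ‖x - y‖ := by linarith

lemma ret_lip {R : ℝ} (hR : 0 ≤ R) (x y : Hs) :
    ‖ret R x - ret R y‖ ≤ 2 * ‖x - y‖ := by
  by_cases hx : ‖x‖ ≤ R <;> by_cases hy : ‖y‖ ≤ R
  · rw [ret_eq_self hx, ret_eq_self hy]
    linarith [norm_nonneg (x - y)]
  · rw [ret_eq_self hx]
    exact ret_mixed hR hx (not_le.1 hy)
  · rw [ret_eq_self hy, ← norm_neg, neg_sub, ← norm_neg (x - y), neg_sub]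
    exact ret_mixed hR hy (not_le.1 hx)
  · push_neg at hx hy
    have hnx : 0 < ‖x‖ := lt_of_le_of_lt hR hx
    have hny : 0 < ‖y‖ := lt_of_le_of_lt hR hy
    have hd : |‖y‖ - ‖x‖| ≤ ‖x - y‖ := by
      rw [← norm_neg (x - y), neg_sub]
      exact abs_norm_sub_norm_le y x
    rw [show ret R x = (R / ‖x‖) • x from if_neg (not_le.2 hx),
        show ret R y = (R / ‖y‖) • y from if_neg (not_le.2 hy)]
    have key : (R / ‖x‖) • x - (R / ‖y‖) • y
        = (R / ‖x‖) • (x - y) + (R / ‖x‖ - R / ‖y‖) • y := by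
      rw [smul_sub, sub_smul]; abel
    rw [key]
    have t1 : ‖(R / ‖x‖) • (x - y)‖ ≤ ‖x - y‖ := by
      rw [norm_smul, Real.norm_eq_abs, abs_of_nonneg (by positivity)]
      have : R / ‖x‖ ≤ 1 := div_le_one_of_le₀ (le_of_lt hx) (le_of_lt hnx)
      nlinarith [norm_nonneg (x - y)]
    have t2 : ‖(R / ‖x‖ - R / ‖y‖) • y‖ ≤ ‖x - y‖ := by
      rw [norm_smul, Real.norm_eq_abs]
      have e : R / ‖x‖ - R / ‖y‖ = R * (‖y‖ - ‖x‖) / (‖x‖ * ‖y‖) := by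
        field_simp
      rw [e, abs_div, abs_mul, abs_of_nonneg hR, abs_of_pos (mul_pos hnx hny)]
      rw [div_mul_eq_mul_div, div_le_iff₀ (mul_pos hnx hny)]
      have h5 : R * |‖y‖ - ‖x‖| ≤ ‖x‖ * ‖x - y‖ := by
        nlinarith [abs_nonneg (‖y‖ - ‖x‖), norm_nonneg (x - y)]
      nlinarith [norm_nonneg (x - y), abs_nonneg (‖y‖ - ‖x‖)]
    calc ‖(R / ‖x‖) • (x - y) + (R / ‖x‖ - R / ‖y‖) • y‖
        ≤ ‖(R / ‖x‖) • (x - y)‖ + ‖(R / ‖x‖ - R / ‖y‖) • y‖ := norm_add_le _ _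
    _ ≤ 2 * ‖x - y‖ := by linarith

/-! ### Auxiliary calculus lemmas -/

lemma hasDerivWithinAt_Ici_of_Icc {f : ℝ → ℝ} {v a b x : ℝ} (hx : a ≤ x) (hxb : x < b)
    (h : HasDerivWithinAt f v (Icc a b) x) : HasDerivWithinAt f v (Ici x) x := by
  refine h.mono_of_mem_nhdsWithin ?_
  have h1 : Iio b ∈ 𝓝[Ici x] x :=
    mem_nhdsWithin_of_mem_nhds (Iio_mem_nhds hxb)
  have h2 : Ici x ∈ 𝓝[Ici x] x := self_mem_nhdsWithin
  refine Filter.mem_of_superset (Filter.inter_mem h2 h1) ?_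
  rintro y ⟨hy1, hy2⟩
  exact ⟨le_trans hx hy1, le_of_lt hy2⟩

lemma abs_le_of_sq_le_sq' {u v : ℝ} (h : u^2 ≤ v^2) (hv : 0 ≤ v) : |u| ≤ v := by
  nlinarith [abs_nonneg u, sq_abs u]

/-! ### Existence for the Galerkin system -/

set_option maxHeartbeats 1000000 in
lemma galerkin (f0 : ℝ) (hf0 : 0 < f0) (a0 : ℕ → ℝ) (ha0 : Summable fun j => (a0 j)^2)
    (N : ℕ) :
    ∃ A : ℝ → ℕ → ℝ,
      (∀ j, A 0 j = if j ≤ N then a0 j else 0) ∧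
      (∀ t ∈ Icc (0:ℝ) (N:ℝ), ∀ m : ℕ,
        ∑ j ∈ Finset.range m, (A t j)^2
          ≤ (Real.sqrt (∑' j, (a0 j)^2) + 1 + (f0+1)*t)^2) ∧
      (∀ j, j ≤ N → ∀ t ∈ Icc (0:ℝ) (N:ℝ),
        HasDerivWithinAt (fun s => A s j) (dyadicRHS f0 (A t) j) (Icc (0:ℝ) (N:ℝ)) t) := by
  classical
  set c : ℝ := Real.sqrt (∑' j, (a0 j)^2) + 1 with hc_def
  have hc1 : 1 ≤ c := by
    have h := Real.sqrt_nonneg (∑' j, (a0 j)^2)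
    rw [hc_def]; linarith
  set T : ℝ := (N : ℝ) with hT_def
  have hT : 0 ≤ T := Nat.cast_nonneg N
  set R0 : ℝ := c + (f0+1)*T + 1 with hR0_def
  have hR0 : 0 < R0 := by
    have h1 : 0 ≤ (f0+1)*T := mul_nonneg (by linarith) hT
    rw [hR0_def]; linarith
  -- initial datum
  set x0 : Hs := ⟨fun j => if j ≤ N then a0 j else 0,
    memℓp_of_finite_support _ (N+1) (fun j hj => if_neg (by omega))⟩ with hx0_def
  have hx0_apply : ∀ j, x0 j = if j ≤ N then a0 j else 0 := fun j => rfl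
  have hx0norm : ‖x0‖ ≤ c - 1 := by
    have h1 : ‖x0‖^2 ≤ ∑' j, (a0 j)^2 := by
      rw [Hs_normsq]
      refine Summable.tsum_le_tsum (fun j => ?_) (Hs_summable x0) ha0
      rw [hx0_apply]
      split_ifs
      · exact le_refl _
      · simpa using sq_nonneg (a0 j)
    have h2 : (c - 1)^2 = ∑' j, (a0 j)^2 := by
      rw [hc_def, add_sub_cancel_right]
      exact Real.sq_sqrt (tsum_nonneg fun j => sq_nonneg _)
    nlinarith [norm_nonneg x0, Real.sqrt_nonneg (∑' j, (a0 j)^2)]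
  -- the modified (retracted) field
  set G : Hs → Hs := fun x => galF f0 N (ret R0 x) with hG_def
  set C : ℝ := (N + 2) * (lam ^ (N+1) * (2 * R0^2) + |f0|) with hC_def
  have hC : 0 ≤ C := by
    have h := lam_pow_nonneg (N+1)
    have : (0:ℝ) ≤ lam ^ (N+1) * (2 * R0^2) + |f0| := by positivity
    positivity
  have hGnorm : ∀ x : Hs, ‖G x‖ ≤ C := fun x =>
    galF_norm_le f0 N (ret R0 x) R0 (le_of_lt hR0) (ret_norm_le (le_of_lt hR0) x)
  set K : ℝ := (N + 2) * (lam ^ (N+1) * (4 * R0)) with hK_def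
  have hK : 0 ≤ K := by
    rw [hK_def]
    exact mul_nonneg (by positivity) (mul_nonneg (lam_pow_nonneg _) (by linarith))
  have hGlip : ∀ x y : Hs, ‖G x - G y‖ ≤ 2 * K * ‖x - y‖ := by
    intro x y
    calc ‖G x - G y‖ ≤ K * ‖ret R0 x - ret R0 y‖ :=
          galF_lip f0 N (ret R0 x) (ret R0 y) R0 (le_of_lt hR0)
            (ret_norm_le (le_of_lt hR0) x) (ret_norm_le (le_of_lt hR0) y)
    _ ≤ K * (2 * ‖x - y‖) := by
        exact mul_le_mul_of_nonneg_left (ret_lip (le_of_lt hR0) x y) hK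
    _ = 2 * K * ‖x - y‖ := by ring
  -- Picard–Lindelöf
  have hPL : IsPicardLindelof (fun _ : ℝ => G) (tmin := 0) (tmax := T) ⟨0, ⟨le_refl 0, hT⟩⟩ x0
      (Real.toNNReal (C*T+1)) 0 (Real.toNNReal C) (Real.toNNReal (2*K)) := by
    refine ⟨?_, ?_, ?_, ?_⟩
    · intro t _
      refine LipschitzOnWith.of_dist_le_mul fun x _ y _ => ?_
      rw [dist_eq_norm, dist_eq_norm, Real.coe_toNNReal _ (by linarith)]
      exact hGlip x y
    · intro x _
      exact continuousOn_const
    · intro t _ x _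
      rw [Real.coe_toNNReal _ hC]
      exact hGnorm x
    · show (Real.toNNReal C : ℝ) * max (T - 0) (0 - 0) ≤ (Real.toNNReal (C*T+1) : ℝ) - ((0:ℝ≥0):ℝ)
      have h1 : 0 ≤ C*T := mul_nonneg hC hT
      rw [Real.coe_toNNReal _ hC, Real.coe_toNNReal _ (by linarith), NNReal.coe_zero, sub_zero,
        sub_zero, max_eq_left hT]
      linarith
  obtain ⟨sol, hsol0', hsolderiv'⟩ := hPL.exists_eq_forall_mem_Icc_hasDerivWithinAt₀
  have hsol0 : sol 0 = x0 := hsol0'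
  have hsolderiv : ∀ t ∈ Icc (0:ℝ) T, HasDerivWithinAt sol (G (sol t)) (Icc 0 T) t := hsolderiv'
  -- component derivatives
  have hcompd : ∀ (j : ℕ), ∀ t ∈ Icc (0:ℝ) T,
      HasDerivWithinAt (fun s => sol s j) ((G (sol t)) j) (Icc 0 T) t := by
    intro j t ht
    exact (evalCLM j).hasFDerivAt.comp_hasDerivWithinAt t (hsolderiv t ht)
  -- components above N vanish
  have hzero : ∀ (j : ℕ), N < j → ∀ t ∈ Icc (0:ℝ) T, sol t j = 0 := by
    intro j hj t ht
    have hd : ∀ s ∈ Icc (0:ℝ) T, HasDerivWithinAt (fun u => sol u j)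
        ((fun _ : ℝ => (0:ℝ)) s) (Icc 0 T) s := by
      intro s hs
      have h := hcompd j s hs
      simp only [hG_def] at h
      rwa [galF_apply_gt f0 N _ j hj] at h
    have := Convex.norm_image_sub_le_of_norm_hasDerivWithin_le (C := 0) hd
      (fun s _ => by simp) (convex_Icc 0 T) ⟨le_refl 0, hT⟩ ht
    simp only [zero_mul, norm_le_zero_iff] at this
    have h0 : sol 0 j = 0 := by rw [hsol0, hx0_apply, if_neg (by omega)]
    have := sub_eq_zero.1 this
    rw [this, h0]
  -- energy identity
  have hflux : ∀ t ∈ Icc (0:ℝ) T, (inner ℝ (G (sol t)) (sol t) : ℝ) = f0 * sol t 0 := by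
    intro t ht
    obtain ⟨m, hm, hmx⟩ := ret_eq_smul hR0 (sol t)
    have hy : ((m • sol t : Hs) : ℕ → ℝ) (N+1) = 0 := by
      rw [lp.coeFn_smul, Pi.smul_apply, hzero (N+1) (by omega) t ht, smul_zero]
    have h1 := inner_galF f0 N (m • sol t) hy
    have h2 : ((m • sol t : Hs) : ℕ → ℝ) 0 = m * sol t 0 := by
      rw [lp.coeFn_smul]; rfl
    rw [h2] at h1
    have h3 : (inner ℝ (galF f0 N (m • sol t)) (m • sol t) : ℝ)
        = m * (inner ℝ (galF f0 N (m • sol t)) (sol t) : ℝ) := real_inner_smul_right _ _ _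
    rw [h3] at h1
    have h4 : (inner ℝ (G (sol t)) (sol t) : ℝ)
        = (inner ℝ (galF f0 N (m • sol t)) (sol t) : ℝ) := by
      simp only [hG_def]; rw [hmx]
    rw [h4]
    have := mul_left_cancel₀ (ne_of_gt hm) (by rw [h1]; ring :
      m * (inner ℝ (galF f0 N (m • sol t)) (sol t) : ℝ) = m * (f0 * sol t 0))
    exact this
  -- energy differential equation
  have hφd : ∀ t ∈ Icc (0:ℝ) T,
      HasDerivWithinAt (fun s => ‖sol s‖^2) (2 * (f0 * sol t 0)) (Icc 0 T) t := by
    intro t ht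
    have hi := (hsolderiv t ht).inner ℝ (hsolderiv t ht)
    have hfun : (fun s : ℝ => (inner ℝ (sol s) (sol s) : ℝ)) = (fun s => ‖sol s‖^2) :=
      funext fun s => real_inner_self_eq_norm_sq (sol s)
    have hval : (inner ℝ (sol t) (G (sol t)) : ℝ) + (inner ℝ (G (sol t)) (sol t) : ℝ)
        = 2 * (f0 * sol t 0) := by
      rw [real_inner_comm (G (sol t)) (sol t), hflux t ht]; ring
    rw [hfun, hval] at hi
    exact hi
  -- comparison with the energy supersolution
  have hBpos : ∀ t : ℝ, 0 ≤ t → (1:ℝ) ≤ c + (f0+1)*t := by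
    intro t ht; nlinarith
  have hφB : ∀ t ∈ Icc (0:ℝ) T, ‖sol t‖^2 ≤ (c + (f0+1)*t)^2 := by
    have key := image_le_of_deriv_right_lt_deriv_boundary
      (f := fun s => ‖sol s‖^2) (f' := fun t => 2 * (f0 * sol t 0)) (a := 0) (b := T)
      (B := fun t => (c + (f0+1)*t)^2) (B' := fun t => 2*(f0+1)*(c+(f0+1)*t))
      (fun t ht => (hφd t ht).continuousWithinAt)
      (fun x hx => hasDerivWithinAt_Ici_of_Icc hx.1 hx.2
        (hφd x ⟨hx.1, le_of_lt hx.2⟩))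
      (by
        show ‖sol 0‖^2 ≤ (c + (f0+1)*0)^2
        rw [hsol0]
        nlinarith [norm_nonneg x0])
      (fun x => by
        have h1 : HasDerivAt (fun t : ℝ => c + (f0+1)*t) (f0+1) x := by
          simpa using ((hasDerivAt_id x).const_mul (f0+1)).const_add c
        have h2 := h1.fun_pow 2
        exact h2.congr_deriv (by norm_num; ring))
      (fun x hx heq => by
        have hx0le : 0 ≤ x := hx.1
        have h2 : (1:ℝ) ≤ c + (f0+1)*x := hBpos x hx0le
        have hsx : ‖sol x‖ = c + (f0+1)*x := by
          have h1 : ‖sol x‖^2 = (c + (f0+1)*x)^2 := heq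
          nlinarith [norm_nonneg (sol x)]
        have habs : |sol x 0| ≤ c + (f0+1)*x := by
          rw [← hsx]; exact Hs_abs_apply_le (sol x) 0
        have h3 : sol x 0 ≤ c + (f0+1)*x := le_trans (le_abs_self _) habs
        show 2 * (f0 * sol x 0) < 2*(f0+1)*(c+(f0+1)*x)
        nlinarith)
    intro t ht
    exact key ht
  -- the solution stays in the ball, hence solves the original system
  have hret_sol : ∀ t ∈ Icc (0:ℝ) T, ret R0 (sol t) = sol t := by
    intro t ht
    refine ret_eq_self ?_
    have h2 : (1:ℝ) ≤ c + (f0+1)*t := hBpos t ht.1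
    have h3 : ‖sol t‖ ≤ c + (f0+1)*t := by
      have h := abs_le_of_sq_le_sq' (hφB t ht) (by linarith)
      rwa [abs_of_nonneg (norm_nonneg _)] at h
    have h4 : c + (f0+1)*t ≤ c + (f0+1)*T := by nlinarith [ht.2, ht.1]
    rw [hR0_def]; linarith
  refine ⟨fun t j => sol t j, ?_, ?_, ?_⟩
  · intro j
    show sol 0 j = _
    rw [hsol0]
  · intro t ht m
    calc ∑ j ∈ Finset.range m, (sol t j)^2 ≤ ‖sol t‖^2 := Hs_sum_range_le (sol t) m
    _ ≤ (c + (f0+1)*t)^2 := hφB t ht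
    _ = (Real.sqrt (∑' j, (a0 j)^2) + 1 + (f0+1)*t)^2 := by rw [hc_def]
  · intro j hj t ht
    have h := hcompd j t ht
    simp only [hG_def] at h
    rw [hret_sol t ht] at h
    rw [galF_apply_le f0 N (sol t) j hj] at h
    exact h

/-! ### Continuity of the RHS -/

lemma continuousOn_dyadicRHS (f0 : ℝ) (u : ℝ → ℕ → ℝ) (S : Set ℝ) (j : ℕ)
    (h : ∀ i, i ≤ j + 2 → ContinuousOn (fun s => u s i) S) :
    ContinuousOn (fun s => dyadicRHS f0 (u s) j) S := by
  cases j with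
  | zero =>
      show ContinuousOn (fun s => -(u s 0 * u s 1) + f0) S
      exact (((h 0 (by omega)).mul (h 1 (by omega))).neg).add continuousOn_const
  | succ j =>
      show ContinuousOn
        (fun s => lam ^ j * (u s j)^2 - lam ^ (j+1) * u s (j+1) * u s (j+2)) S
      exact (continuousOn_const.mul ((h j (by omega)).pow 2)).sub
        ((continuousOn_const.mul (h (j+1) (by omega))).mul (h (j+2) (by omega)))

/-! ### Uniform convergence along an ultrafilter from equi-Lipschitz bounds -/

lemma unif_of_equilip (U : Ultrafilter ℕ) (h : ℕ → ℝ → ℝ) (g : ℝ → ℝ) (T M ε : ℝ)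
    (hT : 0 ≤ T) (hM : 0 ≤ M) (hε : 0 < ε)
    (hlip : ∀ᶠ N in (U : Filter ℕ), ∀ t ∈ Icc 0 T, ∀ s ∈ Icc 0 T,
      |h N t - h N s| ≤ M * |t - s|)
    (hliplim : ∀ t ∈ Icc 0 T, ∀ s ∈ Icc 0 T, |g t - g s| ≤ M * |t - s|)
    (hptwise : ∀ t ∈ Icc 0 T, Tendsto (fun N => h N t) (U : Filter ℕ) (𝓝 (g t))) :
    ∀ᶠ N in (U : Filter ℕ), ∀ t ∈ Icc 0 T, |h N t - g t| ≤ ε := by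
  obtain ⟨n, hn⟩ := exists_nat_gt (3 * M * T / ε)
  have hn1 : (0:ℝ) < n + 1 := by positivity
  have h1 : 3 * M * T < ε * (n + 1) := by
    rw [div_lt_iff₀ hε] at hn
    nlinarith
  have hmesh : M * (T / (n+1)) ≤ ε / 3 := by
    rw [mul_div_assoc']
    rw [div_le_div_iff₀ hn1 (by norm_num : (0:ℝ) < 3)]
    nlinarith
  set p : ℕ → ℝ := fun i => i * T / (n+1) with hp_def
  have hpmem : ∀ i : ℕ, i ≤ n + 1 → p i ∈ Icc (0:ℝ) T := by
    intro i hi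
    constructor
    · positivity
    · show (i:ℝ) * T / (n+1) ≤ T
      rw [div_le_iff₀ hn1]
      have : (i:ℝ) ≤ (n:ℝ) + 1 := by exact_mod_cast hi
      nlinarith
  have hnet : ∀ᶠ N in (U : Filter ℕ), ∀ i ∈ Finset.range (n+2),
      |h N (p i) - g (p i)| ≤ ε/3 := by
    rw [Finset.eventually_all]
    intro i hi
    have hi' : i ≤ n + 1 := by simpa [Finset.mem_range, Nat.lt_succ_iff] using hi
    have ht := hptwise (p i) (hpmem i hi')
    have := (Metric.tendsto_nhds.1 ht) (ε/3) (by linarith)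
    filter_upwards [this] with N hN
    rw [Real.dist_eq] at hN
    exact le_of_lt hN
  filter_upwards [hnet, hlip] with N hN hlipN
  intro t htmem
  rcases eq_or_lt_of_le hT with hT0 | hT0
  · -- T = 0
    have ht0 : t = 0 := le_antisymm (le_trans htmem.2 (le_of_eq hT0.symm)) htmem.1
    have h0 : p 0 = 0 := by rw [hp_def]; simp
    have := hN 0 (by simp)
    rw [h0, ← ht0] at this
    linarith
  · -- T > 0
    set i : ℕ := ⌊t * (n+1) / T⌋₊ with hi_def
    have htnn : 0 ≤ t := htmem.1
    have hfrac : 0 ≤ t * (n+1) / T := by positivity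
    have hile : (i:ℝ) ≤ t * (n+1) / T := Nat.floor_le hfrac
    have hilt : t * (n+1) / T < i + 1 := Nat.lt_floor_add_one _
    have hiub : i ≤ n + 1 := by
      have h1 : t * (n+1) / T ≤ n + 1 := by
        rw [div_le_iff₀ hT0]
        nlinarith [htmem.2]
      have : (i:ℝ) ≤ (n:ℝ) + 1 := le_trans hile h1
      exact_mod_cast this
    have hpi : p i ∈ Icc (0:ℝ) T := hpmem i hiub
    have hTd : 0 ≤ T / (n+1) := by positivity
    have hpi_le : p i ≤ t := by
      show (i:ℝ) * T / (n+1) ≤ t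
      rw [div_le_iff₀ hn1]
      rw [le_div_iff₀ hT0] at hile
      nlinarith
    have hti : t < p i + T / (n+1) := by
      have he : p i + T/(n+1) = ((i:ℝ)*T + T)/(n+1) := by
        show (i:ℝ)*T/(n+1) + T/(n+1) = _
        rw [← add_div]
      rw [he, lt_div_iff₀ hn1]
      rw [div_lt_iff₀ hT0] at hilt
      nlinarith
    have hclose : |t - p i| ≤ T / (n+1) := by
      rw [abs_le]
      exact ⟨by linarith, by linarith⟩
    have e1 : |h N t - h N (p i)| ≤ ε / 3 := by
      calc |h N t - h N (p i)| ≤ M * |t - p i| := hlipN t htmem (p i) hpi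
      _ ≤ M * (T / (n+1)) := mul_le_mul_of_nonneg_left hclose hM
      _ ≤ ε / 3 := hmesh
    have e2 : |h N (p i) - g (p i)| ≤ ε / 3 := hN i (by
      simpa [Finset.mem_range] using (by omega : i < n + 2))
    have e3 : |g (p i) - g t| ≤ ε / 3 := by
      calc |g (p i) - g t| ≤ M * |p i - t| := hliplim (p i) hpi t htmem
      _ = M * |t - p i| := by rw [abs_sub_comm]
      _ ≤ M * (T / (n+1)) := mul_le_mul_of_nonneg_left hclose hM
      _ ≤ ε / 3 := hmesh
    calc |h N t - g t| = |(h N t - h N (p i)) + (h N (p i) - g (p i)) + (g (p i) - g t)| := by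
          congr 1; ring
    _ ≤ |(h N t - h N (p i)) + (h N (p i) - g (p i))| + |g (p i) - g t| := abs_add_le _ _
    _ ≤ |h N t - h N (p i)| + |h N (p i) - g (p i)| + |g (p i) - g t| := by
        have := abs_add_le (h N t - h N (p i)) (h N (p i) - g (p i))
        linarith
    _ ≤ ε := by linarith

end Dyadic


/-- A weak (= classical) solution of the dyadic system on `[0,∞)`: an `ℓ²`-valued
function whose components are differentiable and satisfy the ODEs. -/
def IsDyadicSolution (f0 : ℝ) (a : ℝ → ℕ → ℝ) : Prop :=
  (∀ t ∈ Ici (0:ℝ), Summable (fun j => (a t j)^2)) ∧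
  (∀ j, ∀ t ∈ Ici (0:ℝ), HasDerivWithinAt (fun s => a s j) (dyadicRHS f0 (a t) j) (Ici 0) t)

set_option maxHeartbeats 1000000 in
theorem global_existence (f0 : ℝ) (hf0 : 0 < f0) (a0 : ℕ → ℝ)
    (ha0 : Summable (fun j => (a0 j)^2)) (hpos : ∀ j, 0 ≤ a0 j) :
    ∃ a : ℝ → ℕ → ℝ, IsDyadicSolution f0 a ∧ ∀ j, a 0 j = a0 j := by
  classical
  have hgal := fun N => Dyadic.galerkin f0 hf0 a0 ha0 N
  choose A hA0 hAsum hAder using hgal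
  set cc : ℝ := Real.sqrt (∑' j, (a0 j)^2) + 1 with hcc_def
  have hcc1 : (1:ℝ) ≤ cc := by
    have h := Real.sqrt_nonneg (∑' j, (a0 j)^2)
    rw [hcc_def]; linarith
  have hBpos : ∀ t : ℝ, 0 ≤ t → (1:ℝ) ≤ cc + (f0+1)*t := by
    intro t ht; nlinarith
  have hBmono : ∀ s t : ℝ, 0 ≤ s → s ≤ t → cc + (f0+1)*s ≤ cc + (f0+1)*t := by
    intro s t hs hst; nlinarith
  set U : Ultrafilter ℕ := Ultrafilter.of atTop with hU_def
  have hUle : (U : Filter ℕ) ≤ atTop := Ultrafilter.of_le _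
  have hUreal : ∀ r : ℝ, ∀ᶠ N : ℕ in (U : Filter ℕ), r ≤ (N : ℝ) := by
    intro r
    obtain ⟨n, hn⟩ := exists_nat_ge r
    filter_upwards [hUle (eventually_ge_atTop n)] with N hN
    calc r ≤ (n : ℝ) := hn
    _ ≤ (N : ℝ) := by exact_mod_cast hN
  -- componentwise bounds for the Galerkin solutions
  have hAabs : ∀ N : ℕ, ∀ t ∈ Icc (0:ℝ) (N:ℝ), ∀ j : ℕ, |A N t j| ≤ cc + (f0+1)*t := by
    intro N t ht j
    have h1 := hAsum N t ht (j+1)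
    have h2 : (A N t j)^2 ≤ (cc + (f0+1)*t)^2 :=
      le_trans (Finset.single_le_sum (f := fun i => (A N t i)^2)
        (fun i _ => sq_nonneg _) (Finset.self_mem_range_succ j)) h1
    exact Dyadic.abs_le_of_sq_le_sq' h2 (by have := hBpos t ht.1; linarith)
  -- equi-Lipschitz bounds for the Galerkin components
  have hAlip : ∀ T : ℝ, 0 ≤ T → ∀ j N : ℕ, T ≤ (N:ℝ) → j ≤ N →
      ∀ t ∈ Icc (0:ℝ) T, ∀ s ∈ Icc (0:ℝ) T,
      |A N t j - A N s j| ≤ (lam^(j+1) * (2*(cc + (f0+1)*T)^2) + |f0|) * |t - s| := by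
    intro T hT j N hTN hjN t ht s hs
    have hsub : Icc (0:ℝ) T ⊆ Icc (0:ℝ) (N:ℝ) := Icc_subset_Icc le_rfl hTN
    have hd : ∀ u ∈ Icc (0:ℝ) T,
        HasDerivWithinAt (fun s => A N s j) (dyadicRHS f0 (A N u) j) (Icc 0 T) u :=
      fun u hu => (hAder N j hjN u (hsub hu)).mono hsub
    have hbound : ∀ u ∈ Icc (0:ℝ) T,
        ‖dyadicRHS f0 (A N u) j‖ ≤ lam^(j+1) * (2*(cc + (f0+1)*T)^2) + |f0| := by
      intro u hu
      rw [Real.norm_eq_abs]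
      have hu1 : (1:ℝ) ≤ cc + (f0+1)*u := hBpos u hu.1
      refine le_trans (dyadicRHS_abs_le f0 (A N u) j (cc + (f0+1)*u) (by linarith)
        (fun i _ => hAabs N u (hsub hu) i)) ?_
      have hm := hBmono u T hu.1 hu.2
      have hl := lam_pow_nonneg (j+1)
      have hsq : (cc + (f0+1)*u)^2 ≤ (cc + (f0+1)*T)^2 := by nlinarith
      nlinarith [mul_le_mul_of_nonneg_left hsq hl]
    have := Convex.norm_image_sub_le_of_norm_hasDerivWithin_le hd hbound
      (convex_Icc _ _) hs ht
    simpa [Real.norm_eq_abs] using this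
  -- limits along the ultrafilter exist
  have hlimex : ∀ t : ℝ, 0 ≤ t → ∀ j : ℕ,
      ∃ x : ℝ, Tendsto (fun N => A N t j) (U : Filter ℕ) (𝓝 x) := by
    intro t ht j
    have hmem : ∀ᶠ N : ℕ in (U : Filter ℕ),
        A N t j ∈ Icc (-(cc + (f0+1)*t)) (cc + (f0+1)*t) := by
      filter_upwards [hUreal t] with N hN
      exact abs_le.1 (hAabs N t ⟨ht, hN⟩ j)
    have hle : (Ultrafilter.map (fun N => A N t j) U : Filter ℝ)
        ≤ 𝓟 (Icc (-(cc + (f0+1)*t)) (cc + (f0+1)*t)) := by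
      rw [Ultrafilter.coe_map, Filter.le_principal_iff, Filter.mem_map]
      exact hmem
    obtain ⟨x, _, hconv⟩ := isCompact_Icc.ultrafilter_le_nhds
      (Ultrafilter.map (fun N => A N t j) U) hle
    refine ⟨x, ?_⟩
    rwa [Filter.Tendsto, ← Ultrafilter.coe_map]
  let aa : ℝ → ℕ → ℝ := fun t j =>
    if h : 0 ≤ t then Classical.choose (hlimex t h j) else a0 j
  have halim : ∀ (t : ℝ), 0 ≤ t → ∀ (j : ℕ),
      Tendsto (fun N => A N t j) (U : Filter ℕ) (𝓝 (aa t j)) := by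
    intro t ht j
    have he : aa t j = Classical.choose (hlimex t ht j) := dif_pos ht
    rw [he]
    exact Classical.choose_spec (hlimex t ht j)
  -- bounds for the limit
  have habs : ∀ t : ℝ, 0 ≤ t → ∀ j : ℕ, |aa t j| ≤ cc + (f0+1)*t := by
    intro t ht j
    refine le_of_tendsto (halim t ht j).abs ?_
    filter_upwards [hUreal t] with N hN
    exact hAabs N t ⟨ht, hN⟩ j
  have hsum : ∀ t : ℝ, 0 ≤ t → ∀ m : ℕ,
      ∑ j ∈ Finset.range m, (aa t j)^2 ≤ (cc + (f0+1)*t)^2 := by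
    intro t ht m
    have hconv : Tendsto (fun N => ∑ j ∈ Finset.range m, (A N t j)^2) (U : Filter ℕ)
        (𝓝 (∑ j ∈ Finset.range m, (aa t j)^2)) :=
      tendsto_finset_sum _ (fun j _ => (halim t ht j).pow 2)
    refine le_of_tendsto hconv ?_
    filter_upwards [hUreal t] with N hN
    exact hAsum N t ⟨ht, hN⟩ m
  -- Lipschitz bounds for the limit components
  have hliplim : ∀ T : ℝ, 0 ≤ T → ∀ j : ℕ, ∀ t ∈ Icc (0:ℝ) T, ∀ s ∈ Icc (0:ℝ) T,
      |aa t j - aa s j| ≤ (lam^(j+1) * (2*(cc + (f0+1)*T)^2) + |f0|) * |t - s| := by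
    intro T hT j t ht s hs
    refine le_of_tendsto ((halim t ht.1 j).sub (halim s hs.1 j)).abs ?_
    filter_upwards [hUreal T, hUreal (j : ℝ)] with N h1 h2
    exact hAlip T hT j N h1 (by exact_mod_cast h2) t ht s hs
  have hKc : ∀ (j : ℕ) (T : ℝ), 0 ≤ T → 0 ≤ lam^(j+1) * (2*(cc + (f0+1)*T)^2) + |f0| := by
    intro j T hT
    have hl := lam_pow_nonneg (j+1)
    positivity
  -- continuity of the limit components
  have hcont : ∀ T : ℝ, 0 ≤ T → ∀ j : ℕ, ContinuousOn (fun s => aa s j) (Icc (0:ℝ) T) := by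
    intro T hT j
    refine LipschitzOnWith.continuousOn (K := Real.toNNReal
      (lam^(j+1) * (2*(cc + (f0+1)*T)^2) + |f0|)) ?_
    refine LipschitzOnWith.of_dist_le_mul fun t ht s hs => ?_
    rw [Real.dist_eq, Real.dist_eq, Real.coe_toNNReal _ (hKc j T hT)]
    exact hliplim T hT j t ht s hs
  have hgcont : ∀ T : ℝ, 0 ≤ T → ∀ j : ℕ,
      ContinuousOn (fun s => dyadicRHS f0 (aa s) j) (Icc (0:ℝ) T) :=
    fun T hT j => Dyadic.continuousOn_dyadicRHS f0 aa _ j (fun i _ => hcont T hT i)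
  -- continuity of Galerkin components and their RHS
  have hAcont : ∀ (N : ℕ) (T : ℝ), 0 ≤ T → T ≤ (N:ℝ) → ∀ j : ℕ, j ≤ N →
      ContinuousOn (fun s => A N s j) (Icc (0:ℝ) T) := by
    intro N T hT hTN j hj
    intro u hu
    exact ((hAder N j hj u (Icc_subset_Icc le_rfl hTN hu)).continuousWithinAt).mono
      (Icc_subset_Icc le_rfl hTN)
  have hAgcont : ∀ (N : ℕ) (T : ℝ), 0 ≤ T → T ≤ (N:ℝ) → ∀ j : ℕ, j + 2 ≤ N →
      ContinuousOn (fun s => dyadicRHS f0 (A N s) j) (Icc (0:ℝ) T) := by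
    intro N T hT hTN j hj
    exact Dyadic.continuousOn_dyadicRHS f0 (A N) _ j
      (fun i hi => hAcont N T hT hTN i (by omega))
  -- FTC for the Galerkin solutions
  have hintA : ∀ (j N : ℕ) (t : ℝ), 0 ≤ t → t ≤ (N:ℝ) → j + 2 ≤ N →
      A N t j = A N 0 j + ∫ s in (0:ℝ)..t, dyadicRHS f0 (A N s) j := by
    intro j N t ht htN hjN
    have heq := intervalIntegral.integral_eq_sub_of_hasDeriv_right_of_le ht
      (hAcont N t ht htN j (by omega))
      (fun x hx => by
        have hx' : x ∈ Icc (0:ℝ) (N:ℝ) :=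
          ⟨le_of_lt hx.1, le_trans (le_of_lt hx.2) htN⟩
        have h1 : Ioc x (N:ℝ) ∈ 𝓝[>] x :=
          Ioc_mem_nhdsGT_of_mem ⟨le_refl x, lt_of_lt_of_le hx.2 htN⟩
        refine (hAder N j (by omega) x hx').mono_of_mem_nhdsWithin
          (Filter.mem_of_superset h1 ?_)
        intro y hy
        exact ⟨le_trans (le_of_lt hx.1) (le_of_lt hy.1), hy.2⟩)
      (by
        have := (hAgcont N t ht htN j hjN)
        rw [← uIcc_of_le ht] at this
        exact this.intervalIntegrable)
    linarith [heq]
  -- convergence of the integrals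
  have hIconv : ∀ (j : ℕ) (t : ℝ), 0 ≤ t →
      Tendsto (fun N => ∫ s in (0:ℝ)..t, dyadicRHS f0 (A N s) j) (U : Filter ℕ)
        (𝓝 (∫ s in (0:ℝ)..t, dyadicRHS f0 (aa s) j)) := by
    intro j t ht
    rw [Metric.tendsto_nhds]
    intro ε hε
    have hb1 : (1:ℝ) ≤ cc + (f0+1)*t := hBpos t ht
    set b : ℝ := cc + (f0+1)*t with hb_def
    set L : ℝ := lam^(j+1) * (4*b) with hL_def
    have hL : 0 ≤ L := by
      rw [hL_def]
      exact mul_nonneg (lam_pow_nonneg _) (by linarith)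
    set δ : ℝ := ε / (2*(L*t+1)) with hδ_def
    have hLt : 0 < L*t + 1 := by nlinarith [mul_nonneg hL ht]
    have hδ : 0 < δ := by
      rw [hδ_def]
      positivity
    have hunif : ∀ i : ℕ, i ≤ j + 2 → ∀ᶠ N in (U : Filter ℕ),
        ∀ s ∈ Icc (0:ℝ) t, |A N s i - aa s i| ≤ δ := by
      intro i hi
      refine Dyadic.unif_of_equilip U (fun N s => A N s i) (fun s => aa s i) t
        (lam^(i+1) * (2*(cc + (f0+1)*t)^2) + |f0|) δ ht (hKc i t ht) hδ ?_
        (hliplim t ht i) (fun s hs => halim s hs.1 i)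
      filter_upwards [hUreal t, hUreal (i:ℝ)] with N h1 h2
      exact hAlip t ht i N h1 (by exact_mod_cast h2)
    have hall : ∀ᶠ N in (U : Filter ℕ), ∀ i ∈ Finset.range (j+3),
        ∀ s ∈ Icc (0:ℝ) t, |A N s i - aa s i| ≤ δ := by
      rw [Finset.eventually_all]
      intro i hi
      exact hunif i (by simpa [Finset.mem_range, Nat.lt_succ_iff] using hi)
    filter_upwards [hall, hUreal t, hUreal ((j:ℝ)+3)] with N hN hNt hNj
    have hNj' : j + 3 ≤ N := by exact_mod_cast (by push_cast; linarith : ((j+3:ℕ):ℝ) ≤ N)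
    -- integrability
    have hint1 : IntervalIntegrable (fun s => dyadicRHS f0 (A N s) j) volume 0 t := by
      have := hAgcont N t ht hNt j (by omega)
      rw [← uIcc_of_le ht] at this
      exact this.intervalIntegrable
    have hint2 : IntervalIntegrable (fun s => dyadicRHS f0 (aa s) j) volume 0 t := by
      have := hgcont t ht j
      rw [← uIcc_of_le ht] at this
      exact this.intervalIntegrable
    rw [Real.dist_eq, ← intervalIntegral.integral_sub hint1 hint2]
    have hbd : ∀ s ∈ Set.uIoc (0:ℝ) t,
        ‖dyadicRHS f0 (A N s) j - dyadicRHS f0 (aa s) j‖ ≤ L * δ := by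
      intro s hs
      rw [uIoc_of_le ht] at hs
      have hs' : s ∈ Icc (0:ℝ) t := ⟨le_of_lt hs.1, hs.2⟩
      have hsN : s ∈ Icc (0:ℝ) (N:ℝ) := ⟨le_of_lt hs.1, le_trans hs.2 hNt⟩
      have hmono := hBmono s t hs'.1 hs'.2
      rw [Real.norm_eq_abs, hL_def]
      refine dyadicRHS_sub_le f0 (A N s) (aa s) j b δ (by linarith)
        (fun i _ => le_trans (hAabs N s hsN i) (by rw [hb_def]; exact hmono))
        (fun i _ => le_trans (habs s hs'.1 i) (by rw [hb_def]; exact hmono))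
        (fun i hi => hN i (by simp [Finset.mem_range]; omega) s hs')
    have hkey := intervalIntegral.norm_integral_le_of_norm_le_const hbd
    have : L * δ * |t - 0| < ε := by
      rw [sub_zero, abs_of_nonneg ht, hδ_def, div_eq_mul_inv]
      have key : L * (ε * (2*(L*t+1))⁻¹) * t = (L*t) * ε / (2*(L*t+1)) := by
        field_simp
      rw [key, div_lt_iff₀ (by linarith : (0:ℝ) < 2*(L*t+1))]
      have h6 : (0:ℝ) < L*t+2 := by nlinarith [mul_nonneg hL ht]
      nlinarith [mul_pos hε h6]
    calc |∫ s in (0:ℝ)..t, (dyadicRHS f0 (A N s) j - dyadicRHS f0 (aa s) j)|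
        = ‖∫ s in (0:ℝ)..t, (dyadicRHS f0 (A N s) j - dyadicRHS f0 (aa s) j)‖ :=
          (Real.norm_eq_abs _).symm
    _ ≤ L * δ * |t - 0| := hkey
    _ < ε := this
  -- integral identity for the limit
  have hint : ∀ (j : ℕ) (t : ℝ), 0 ≤ t →
      aa t j = a0 j + ∫ s in (0:ℝ)..t, dyadicRHS f0 (aa s) j := by
    intro j t ht
    refine tendsto_nhds_unique (halim t ht j) ?_
    have h2 : Tendsto (fun N => a0 j + ∫ s in (0:ℝ)..t, dyadicRHS f0 (A N s) j)
        (U : Filter ℕ) (𝓝 (a0 j + ∫ s in (0:ℝ)..t, dyadicRHS f0 (aa s) j)) :=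
      tendsto_const_nhds.add (hIconv j t ht)
    refine Tendsto.congr' ?_ h2
    filter_upwards [hUreal t, hUreal ((j:ℝ)+3)] with N h1 h2'
    have hjN : j + 3 ≤ N := by exact_mod_cast (by push_cast; linarith : ((j+3:ℕ):ℝ) ≤ N)
    rw [hintA j N t ht h1 (by omega), hA0 N j, if_pos (by omega)]
  -- assembling the solution
  refine ⟨aa, ⟨?_, ?_⟩, ?_⟩
  · intro t ht
    rw [Set.mem_Ici] at ht
    exact summable_of_sum_range_le (fun n => sq_nonneg _) (hsum t ht)
  · intro j t ht
    rw [Set.mem_Ici] at ht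
    have key : HasDerivWithinAt (fun s => a0 j + ∫ u in (0:ℝ)..s, dyadicRHS f0 (aa u) j)
        (dyadicRHS f0 (aa t) j) (Ici 0) t := by
      rcases eq_or_lt_of_le ht with h0 | h0
      · -- t = 0
        obtain rfl : (0:ℝ) = t := h0
        refine HasDerivWithinAt.const_add _ ?_
        have hIoc : Ioc (0:ℝ) 1 ∈ 𝓝[>] (0:ℝ) :=
          Ioc_mem_nhdsGT_of_mem ⟨le_refl _, zero_lt_one⟩
        have h1 : IntervalIntegrable (fun u => dyadicRHS f0 (aa u) j) volume 0 0 :=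
          IntervalIntegrable.refl
        have h2 : StronglyMeasurableAtFilter (fun u => dyadicRHS f0 (aa u) j) (𝓝[>] (0:ℝ))
            volume :=
          ⟨Ioc 0 1, hIoc,
            ((hgcont 1 zero_le_one j).mono Ioc_subset_Icc_self).aestronglyMeasurable
              measurableSet_Ioc⟩
        have h3 : ContinuousWithinAt (fun u => dyadicRHS f0 (aa u) j) (Ioi (0:ℝ)) 0 :=
          ((hgcont 1 zero_le_one j) 0 ⟨le_refl _, zero_le_one⟩).mono_of_mem_nhdsWithin
            (Filter.mem_of_superset hIoc Ioc_subset_Icc_self)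
        exact intervalIntegral.integral_hasDerivWithinAt_right h1 h2 h3
      · -- 0 < t
        refine HasDerivWithinAt.const_add _ ?_
        have ht1 : t < t + 1 := lt_add_one t
        have hda : HasDerivAt (fun s => ∫ u in (0:ℝ)..s, dyadicRHS f0 (aa u) j)
            (dyadicRHS f0 (aa t) j) t := by
          refine intervalIntegral.integral_hasDerivAt_right ?_ ?_ ?_
          · have := hgcont t ht j
            rw [← uIcc_of_le ht] at this
            exact this.intervalIntegrable
          · refine ⟨Ioo (t/2) (t+1), Ioo_mem_nhds (by linarith) ht1, ?_⟩
            refine ((hgcont (t+1) (by linarith) j).mono ?_).aestronglyMeasurable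
              measurableSet_Ioo
            intro y hy
            exact ⟨by linarith [hy.1], le_of_lt hy.2⟩
          · refine ((hgcont (t+1) (by linarith) j) t ⟨ht, by linarith⟩).continuousAt
              (Icc_mem_nhds (by linarith) ht1)
        exact hda.hasDerivWithinAt
    refine key.congr (fun y hy => ?_) ?_
    · exact hint j y (Set.mem_Ici.1 hy)
    · exact hint j t ht
  · intro j
    have h := hint j 0 le_rfl
    simpa using h
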